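/- Let M and M̂ be as in the single-component specialization construction. Then the characteristic polynomials satisfy charpoly(M̂) = charpoly(Z)^{y·w − 1} · charpoly(M) as polynomials with real coefficients. Equivalently, det(λI − M̂) = det(λI − Z)^{y·w − 1} · det(λI − M) for all λ. -/

import Mathlib

open Matrix

/-- The single-component specialization `M̂` of the block matrix `M = [[U, ΣY_i],[ΣW_j, Z]]`:
indices `B ⊕ (P × C)` with `P = Fin y × Fin w`; its `(B,B)` block is `U`, its
`(B, {(i,j)}×C)` block is `Y i`, its `({(i,j)}×C, B)` block is `W j`, its diagonal
`({(i,j)}×C, {(i,j)}×C)` blocks are `Z`, and all blocks between distinct copies are zero. -/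
def specialization {l m y w : ℕ}
    (U : Matrix (Fin l) (Fin l) ℝ) (Z : Matrix (Fin m) (Fin m) ℝ)
    (Y : Fin y → Matrix (Fin l) (Fin m) ℝ) (W : Fin w → Matrix (Fin m) (Fin l) ℝ) :
    Matrix (Fin l ⊕ ((Fin y × Fin w) × Fin m)) (Fin l ⊕ ((Fin y × Fin w) × Fin m)) ℝ :=
  fun r c =>
    match r, c with
    | Sum.inl a, Sum.inl b => U a b
    | Sum.inl a, Sum.inr ((i, _), c') => Y i a c'
    | Sum.inr ((_, j), r'), Sum.inl b => W j r' b
    | Sum.inr (p, r'), Sum.inr (q, c') => if p = q then Z r' c' else 0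

/-- The original block matrix `M = [[U, Y],[W, Z]]` with `Y = ΣY_i`, `W = ΣW_j`. -/
def origMatrix {l m y w : ℕ}
    (U : Matrix (Fin l) (Fin l) ℝ) (Z : Matrix (Fin m) (Fin m) ℝ)
    (Y : Fin y → Matrix (Fin l) (Fin m) ℝ) (W : Fin w → Matrix (Fin m) (Fin l) ℝ) :
    Matrix (Fin l ⊕ Fin m) (Fin l ⊕ Fin m) ℝ :=
  Matrix.fromBlocks U (∑ i, Y i) (∑ j, W j) Z

section Aux

open Polynomial

lemma eval_charpoly_aux {n : Type*} [Fintype n] [DecidableEq n]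
    (M : Matrix n n ℝ) (a : ℝ) :
    (M.charpoly).eval a = (a • (1 : Matrix n n ℝ) - M).det := by
  rw [Matrix.charpoly, ← Polynomial.coe_evalRingHom, RingHom.map_det]
  congr 1
  ext i j
  by_cases h : i = j
  · subst h
    simp [Matrix.charmatrix_apply_eq, Matrix.one_apply, Matrix.sub_apply, Matrix.smul_apply]
  · simp [Matrix.charmatrix_apply_ne _ _ _ h, Matrix.one_apply_ne h, Matrix.sub_apply,
      Matrix.smul_apply]

lemma det_spec_aux {l m y w : ℕ}
    (U : Matrix (Fin l) (Fin l) ℝ) (Z : Matrix (Fin m) (Fin m) ℝ)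
    (Y : Fin y → Matrix (Fin l) (Fin m) ℝ) (W : Fin w → Matrix (Fin m) (Fin l) ℝ)
    (lam : ℝ) (hZ : (lam • (1 : Matrix (Fin m) (Fin m) ℝ) - Z).det ≠ 0) :
    (lam • (1 : Matrix (Fin l ⊕ ((Fin y × Fin w) × Fin m))
        (Fin l ⊕ ((Fin y × Fin w) × Fin m)) ℝ) - specialization U Z Y W).det
      = (lam • (1 : Matrix (Fin m) (Fin m) ℝ) - Z).det ^ (y * w)
        * ((lam • 1 - U) - (∑ i, Y i) * (lam • (1 : Matrix (Fin m) (Fin m) ℝ) - Z)⁻¹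
            * (∑ j, W j)).det
    ∧ (lam • (1 : Matrix (Fin l ⊕ Fin m) (Fin l ⊕ Fin m) ℝ) - origMatrix U Z Y W).det
      = (lam • (1 : Matrix (Fin m) (Fin m) ℝ) - Z).det
        * ((lam • 1 - U) - (∑ i, Y i) * (lam • (1 : Matrix (Fin m) (Fin m) ℝ) - Z)⁻¹
            * (∑ j, W j)).det := by
  set A : Matrix (Fin m) (Fin m) ℝ := lam • 1 - Z with hA
  haveI : Invertible A := A.invertibleOfIsUnitDet (isUnit_iff_ne_zero.mpr hZ)
  have hAinv : A * A⁻¹ = 1 := A.mul_nonsing_inv (isUnit_iff_ne_zero.mpr hZ)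
  constructor
  · -- specialization side
    have hyP : Fintype.card (Fin y × Fin w) = y * w := by
      simp [Fintype.card_prod]
    set Yh : Matrix (Fin l) ((Fin y × Fin w) × Fin m) ℝ := fun a pc => Y pc.1.1 a pc.2 with hYh
    set Wh : Matrix ((Fin y × Fin w) × Fin m) (Fin l) ℝ := fun pr b => W pr.1.2 pr.2 b with hWh
    set D : Matrix ((Fin y × Fin w) × Fin m) ((Fin y × Fin w) × Fin m) ℝ :=
      (Matrix.blockDiagonal fun _ : Fin y × Fin w => A).submatrix
        (Equiv.prodComm _ _) (Equiv.prodComm _ _) with hD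
    set E : Matrix ((Fin y × Fin w) × Fin m) ((Fin y × Fin w) × Fin m) ℝ :=
      (Matrix.blockDiagonal fun _ : Fin y × Fin w => A⁻¹).submatrix
        (Equiv.prodComm _ _) (Equiv.prodComm _ _) with hE
    have hDE : D * E = 1 := by
      rw [hD, hE, Matrix.submatrix_mul_equiv, ← Matrix.blockDiagonal_mul]
      simp only [hAinv]
      rw [show (fun _ : Fin y × Fin w => (1 : Matrix (Fin m) (Fin m) ℝ)) = 1 from rfl,
        Matrix.blockDiagonal_one, Matrix.submatrix_one_equiv]
    haveI : Invertible D := invertibleOfRightInverse _ _ hDE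
    have hDinv : ⅟ D = E := invOf_eq_right_inv hDE
    have h2 : lam • (1 : Matrix (Fin l ⊕ ((Fin y × Fin w) × Fin m))
        (Fin l ⊕ ((Fin y × Fin w) × Fin m)) ℝ)
        - specialization U Z Y W
        = Matrix.fromBlocks (lam • 1 - U) (-Yh) (-Wh) D := by
      ext i j
      rcases i with a | ⟨p, r⟩ <;> rcases j with b | ⟨q, c⟩
      · simp [specialization, Matrix.one_apply, Matrix.sub_apply, Matrix.smul_apply]
      · simp [specialization, Matrix.one_apply, Matrix.sub_apply, Matrix.smul_apply, hYh]; rfl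
      · simp [specialization, Matrix.one_apply, Matrix.sub_apply, Matrix.smul_apply, hWh]; rfl
      · by_cases hpq : p = q
        · subst hpq
          simp [specialization, hD, Matrix.one_apply, Matrix.sub_apply, Matrix.smul_apply,
            Matrix.blockDiagonal_apply, hA, Prod.ext_iff]
        · simp [specialization, hD, Matrix.one_apply, Matrix.sub_apply, Matrix.smul_apply,
            Matrix.blockDiagonal_apply, hpq, Prod.ext_iff]
    have hdetD : D.det = A.det ^ (y * w) := by
      rw [hD, Matrix.det_submatrix_equiv_self, Matrix.det_blockDiagonal]
      simp [Finset.prod_const, hyP]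
    have hYE : Yh * E = fun a qc => (Y qc.1.1 * A⁻¹) a qc.2 := by
      ext a ⟨q, c⟩
      rw [Matrix.mul_apply, Fintype.sum_prod_type]
      simp only [hYh, hE, Matrix.submatrix_apply, Equiv.prodComm_apply, Prod.swap_prod_mk,
        Matrix.blockDiagonal_apply, mul_ite, mul_zero]
      rw [Finset.sum_comm]
      simp [Matrix.mul_apply, Finset.sum_ite_eq', Finset.mul_sum]
    have h3 : Yh * E * Wh = (∑ i, Y i) * A⁻¹ * (∑ j, W j) := by
      have hsum : (∑ i, Y i) * A⁻¹ * (∑ j, W j)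
          = ∑ p : Fin y × Fin w, Y p.1 * A⁻¹ * W p.2 := by
        rw [Fintype.sum_prod_type]
        simp [Matrix.sum_mul, Matrix.mul_sum]
        rw [Finset.sum_comm]
      rw [hYE, hsum]
      ext a b
      show ∑ x, (Y x.1.1 * A⁻¹) a x.2 * Wh x b = _
      rw [Fintype.sum_prod_type]
      simp [hWh, Matrix.sum_apply, Matrix.mul_apply, Finset.sum_mul, mul_assoc]
    rw [h2, Matrix.det_fromBlocks₂₂, hDinv, hdetD]
    simp only [Matrix.neg_mul, Matrix.mul_neg, neg_neg]
    rw [h3]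
  · -- original matrix side
    have h1 : lam • (1 : Matrix (Fin l ⊕ Fin m) (Fin l ⊕ Fin m) ℝ) - origMatrix U Z Y W
        = Matrix.fromBlocks (lam • 1 - U) (-(∑ i, Y i)) (-(∑ j, W j)) A := by
      ext i j
      rcases i with a | r <;> rcases j with b | c <;>
        simp [origMatrix, Matrix.one_apply, Matrix.sub_apply, Matrix.smul_apply, hA,
          Finset.sum_apply]
    rw [h1, Matrix.det_fromBlocks₂₂, Matrix.invOf_eq_nonsing_inv]
    simp only [Matrix.neg_mul, Matrix.mul_neg, neg_neg]

end Aux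

/-- `charpoly(M̂) = charpoly(Z)^{y·w − 1} · charpoly(M)`; equivalently
`det(λI − M̂) = det(λI − Z)^{y·w − 1} · det(λI − M)` for all `λ`. -/
theorem charpoly_specialization
    {l m y w : ℕ} (hl : 1 ≤ l) (hm : 1 ≤ m) (hy : 1 ≤ y) (hw : 1 ≤ w)
    (U : Matrix (Fin l) (Fin l) ℝ) (Z : Matrix (Fin m) (Fin m) ℝ)
    (Y : Fin y → Matrix (Fin l) (Fin m) ℝ) (W : Fin w → Matrix (Fin m) (Fin l) ℝ) :
    Matrix.charpoly (specialization U Z Y W)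
      = Matrix.charpoly Z ^ (y * w - 1) * Matrix.charpoly (origMatrix U Z Y W)
    ∧ ∀ lam : ℝ,
      Matrix.det (lam • (1 : Matrix (Fin l ⊕ ((Fin y × Fin w) × Fin m))
            (Fin l ⊕ ((Fin y × Fin w) × Fin m)) ℝ) - specialization U Z Y W)
        = Matrix.det (lam • (1 : Matrix (Fin m) (Fin m) ℝ) - Z) ^ (y * w - 1)
          * Matrix.det (lam • (1 : Matrix (Fin l ⊕ Fin m) (Fin l ⊕ Fin m) ℝ)
              - origMatrix U Z Y W) := by
  have hyw : 1 ≤ y * w := Nat.one_le_iff_ne_zero.mpr (by positivity)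
  have hpow : y * w = (y * w - 1) + 1 := (Nat.succ_pred_eq_of_pos hyw).symm
  have key : ∀ lam : ℝ, (lam • (1 : Matrix (Fin m) (Fin m) ℝ) - Z).det ≠ 0 →
      Matrix.det (lam • (1 : Matrix (Fin l ⊕ ((Fin y × Fin w) × Fin m))
            (Fin l ⊕ ((Fin y × Fin w) × Fin m)) ℝ) - specialization U Z Y W)
        = Matrix.det (lam • (1 : Matrix (Fin m) (Fin m) ℝ) - Z) ^ (y * w - 1)
          * Matrix.det (lam • (1 : Matrix (Fin l ⊕ Fin m) (Fin l ⊕ Fin m) ℝ)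
              - origMatrix U Z Y W) := by
    intro lam hZ
    obtain ⟨h1, h2⟩ := det_spec_aux U Z Y W lam hZ
    rw [h1, h2, show (lam • (1 : Matrix (Fin m) (Fin m) ℝ) - Z).det ^ (y * w)
      = (lam • (1 : Matrix (Fin m) (Fin m) ℝ) - Z).det ^ (y * w - 1)
        * (lam • (1 : Matrix (Fin m) (Fin m) ℝ) - Z).det from by rw [← pow_succ, ← hpow]]
    ring
  have main : Matrix.charpoly (specialization U Z Y W)
      = Matrix.charpoly Z ^ (y * w - 1) * Matrix.charpoly (origMatrix U Z Y W) := by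
    apply Polynomial.eq_of_infinite_eval_eq
    have hfin : {x : ℝ | (Matrix.charpoly Z).IsRoot x}.Finite :=
      Polynomial.finite_setOf_isRoot (Matrix.charpoly_monic Z).ne_zero
    apply Set.Infinite.mono (s := {x : ℝ | (Matrix.charpoly Z).IsRoot x}ᶜ)
    · intro x hx
      have hZx : (x • (1 : Matrix (Fin m) (Fin m) ℝ) - Z).det ≠ 0 := by
        rw [← eval_charpoly_aux]
        exact hx
      simp only [Set.mem_setOf_eq, Polynomial.eval_mul, Polynomial.eval_pow]
      rw [eval_charpoly_aux, eval_charpoly_aux, eval_charpoly_aux]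
      exact key x hZx
    · exact Set.Finite.infinite_compl hfin
  refine ⟨main, fun lam => ?_⟩
  have := congrArg (Polynomial.eval lam) main
  simp only [Polynomial.eval_mul, Polynomial.eval_pow] at this
  rwa [eval_charpoly_aux, eval_charpoly_aux, eval_charpoly_aux] at this
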